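/- Let G be a connected (n,k,λ,μ)-strongly regular graph on vertex set V that is not complete (there exist two distinct non-adjacent vertices) and is not a complete bipartite graph K_{m,m} (equivalently, it is not the case that both λ = 0 and μ = k). Then the exponent of the critical group K(G) (the least positive integer N such that N·x = 0 for all x in K(G)) is exactly n·μ. -/

import Mathlib

open Finset
open Matrix SimpleGraph

/-- The subgroup of integer vectors whose coordinates sum to zero. -/
def sumZero (V : Type*) [Fintype V] : AddSubgroup (V → ℤ) where
  carrier := {x | ∑ v, x v = 0}
  add_mem' {a b} ha hb := by
    simp only [Set.mem_setOf_eq] at *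
    simp [Finset.sum_add_distrib, ha, hb]
  zero_mem' := by simp
  neg_mem' {a} ha := by
    simp only [Set.mem_setOf_eq] at *
    simp [ha]

/-- The ℤ-span of the rows of an integer matrix, as an additive subgroup of `V → ℤ`. -/
def rowSpan {V : Type*} [Fintype V] (L : Matrix V V ℤ) : AddSubgroup (V → ℤ) :=
  (Submodule.span ℤ (Set.range fun w => L w)).toAddSubgroup

/-- The critical group of a graph: the quotient of the sum-zero vectors by the
row span of the Laplacian. -/
def critGroup {V : Type*} [Fintype V] [DecidableEq V] (G : SimpleGraph V)
    [DecidableRel G.Adj] :=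
  sumZero V ⧸ (rowSpan (G.lapMatrix ℤ)).addSubgroupOf (sumZero V)

noncomputable instance {V : Type*} [Fintype V] [DecidableEq V] (G : SimpleGraph V)
    [DecidableRel G.Adj] : AddCommGroup (critGroup G) :=
  QuotientAddGroup.Quotient.addCommGroup _

section Aux

variable {V : Type*} [Fintype V] [DecidableEq V] {G : SimpleGraph V} [DecidableRel G.Adj]
variable {n k l μ : ℕ}

private lemma rowSpan_mem_iff {M : Matrix V V ℤ} (hM : M.IsSymm) (x : V → ℤ) :
    x ∈ rowSpan M ↔ ∃ y, M *ᵥ y = x := by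
  have key : ∀ y : V → ℤ, ∑ i, y i • M i = M *ᵥ y := by
    intro y
    funext v
    simp only [Finset.sum_apply, Pi.smul_apply, smul_eq_mul, Matrix.mulVec, dotProduct]
    exact Finset.sum_congr rfl fun i _ => by rw [mul_comm, hM.apply]
  rw [rowSpan, Submodule.mem_toAddSubgroup, Submodule.mem_span_range_iff_exists_fun]
  constructor
  · rintro ⟨c, rfl⟩; exact ⟨c, (key c).symm⟩
  · rintro ⟨y, rfl⟩; exact ⟨y, key y⟩

private lemma lap_eq (hsrg : G.IsSRGWith n k l μ) :
    G.lapMatrix ℤ = (k : ℤ) • (1 : Matrix V V ℤ) - G.adjMatrix ℤ := by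
  ext i j
  simp only [lapMatrix, degMatrix, Matrix.sub_apply, Matrix.diagonal_apply, Matrix.smul_apply,
    Matrix.one_apply, adjMatrix_apply, hsrg.regular i, smul_eq_mul]
  split_ifs <;> simp

private lemma compl_eq : Gᶜ.adjMatrix ℤ =
    (Matrix.of fun _ _ => (1:ℤ)) - 1 - G.adjMatrix ℤ := by
  ext i j
  simp only [adjMatrix_apply, compl_adj, Matrix.sub_apply, Matrix.of_apply, Matrix.one_apply]
  by_cases h1 : i = j
  · subst h1; simp
  · by_cases h2 : G.Adj i j <;> simp [h1, h2]

private lemma lap_sq (hsrg : G.IsSRGWith n k l μ)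
    (hparam : (n:ℤ) * μ = k^2 - k*l + k*μ - k + μ) :
    G.lapMatrix ℤ * G.lapMatrix ℤ =
      ((2*k+μ:ℤ) - l) • G.lapMatrix ℤ - ((n:ℤ)*μ) • (1 : Matrix V V ℤ)
        + (μ:ℤ) • (Matrix.of fun _ _ => (1:ℤ)) := by
  have hA2 : G.adjMatrix ℤ * G.adjMatrix ℤ =
      (k:ℤ) • (1 : Matrix V V ℤ) + (l:ℤ) • G.adjMatrix ℤ
        + (μ:ℤ) • ((Matrix.of fun _ _ => (1:ℤ)) - 1 - G.adjMatrix ℤ) := by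
    have h := hsrg.matrix_eq (α := ℤ)
    rw [pow_two, compl_eq] at h
    rw [h]
    simp only [← Nat.cast_smul_eq_nsmul (R := ℤ)]
  rw [lap_eq hsrg, hparam]
  simp only [sub_mul, mul_sub, smul_mul_assoc, mul_smul_comm, one_mul, mul_one]
  rw [hA2]
  module

private lemma mu_pos (hsrg : G.IsSRGWith n k l μ) (hconn : G.Connected)
    (hnotcomplete : ∃ x y : V, x ≠ y ∧ ¬G.Adj x y) : 0 < μ := by
  by_contra hμ
  push_neg at hμ
  interval_cases μ
  obtain ⟨u, v, huv, hnadj⟩ := hnotcomplete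
  have key : ∀ (a b : V) (_ : G.Walk a b), a = b ∨ G.Adj a b := by
    intro a b p
    induction p with
    | nil => exact Or.inl rfl
    | @cons a' b' c' h q ih =>
      rcases ih with rfl | hbc
      · exact Or.inr h
      · by_cases hac : a' = c'
        · exact Or.inl hac
        by_cases hadj : G.Adj a' c'
        · exact Or.inr hadj
        have h0 := hsrg.of_not_adj hac hadj
        have hb : b' ∈ G.commonNeighbors a' c' := ⟨h, hbc.symm⟩
        have : 0 < Fintype.card (G.commonNeighbors a' c') :=
          Fintype.card_pos_iff.2 ⟨⟨b', hb⟩⟩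
        omega
  rcases key u v (hconn.preconnected u v).some with rfl | h
  · exact huv rfl
  · exact hnadj h

/-- The value `c * x w - (L *ᵥ x) w` for `x = e_u - e_v`, as an explicit expression. -/
private def fval (G : SimpleGraph V) [DecidableRel G.Adj] (k c : ℤ) (u v w : V) : ℤ :=
  c * ((if w = u then 1 else 0) - (if w = v then 1 else 0))
    - (((if w = u then k else 0) - (if G.Adj w u then 1 else 0))
       - ((if w = v then k else 0) - (if G.Adj w v then 1 else 0)))

private lemma fval_eq (hsrg : G.IsSRGWith n k l μ) (c : ℤ) (u v w : V) :
    fval G (k:ℤ) c u v w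
      = c * ((Pi.single u 1 - Pi.single v 1 : V → ℤ)) w
        - (G.lapMatrix ℤ *ᵥ (Pi.single u 1 - Pi.single v 1 : V → ℤ)) w := by
  rw [Matrix.mulVec_sub, lap_eq hsrg]
  simp only [fval, Pi.sub_apply, Matrix.mulVec_single_one, Matrix.col_apply, Matrix.sub_apply, Matrix.smul_apply,
    Matrix.one_apply, adjMatrix_apply, Pi.single_apply, smul_eq_mul, mul_one]
  split_ifs <;> ring

end Aux

theorem stmt1 {V : Type*} [Fintype V] [DecidableEq V] (G : SimpleGraph V)
    [DecidableRel G.Adj] {n k l μ : ℕ}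
    (hsrg : G.IsSRGWith n k l μ) (hconn : G.Connected)
    (hnotcomplete : ∃ x y : V, x ≠ y ∧ ¬G.Adj x y)
    (hnotbip : ¬(l = 0 ∧ μ = k)) :
    AddMonoid.exponent (critGroup G) = n * μ := by
  classical
  obtain ⟨u0, v0, hne0, hnadj0⟩ := hnotcomplete
  have hVne : Nonempty V := ⟨u0⟩
  have hn0 : 0 < n := by rw [← hsrg.card]; exact Fintype.card_pos
  have hμ0 : 0 < μ := mu_pos hsrg hconn ⟨u0, v0, hne0, hnadj0⟩
  -- an adjacent pair
  obtain ⟨a0, b0, hab0⟩ : ∃ a b : V, G.Adj a b := by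
    obtain ⟨p⟩ := hconn.preconnected u0 v0
    cases p with
    | nil => exact absurd rfl hne0
    | cons h q => exact ⟨_, _, h⟩
  have hkl : l < k := by
    have h1 := hab0.card_commonNeighbors_lt_degree
    rwa [hsrg.of_adj _ _ hab0, hsrg.regular a0] at h1
  have hkn : k < n := by
    have h1 := G.degree_lt_card_verts a0
    rwa [hsrg.regular a0, hsrg.card] at h1
  have hμk : μ ≤ k := by
    have h1 := G.card_commonNeighbors_le_degree_left u0 v0
    rwa [hsrg.of_not_adj hne0 hnadj0, hsrg.regular u0] at h1
  have hparam : (n:ℤ) * μ = k^2 - k*l + k*μ - k + μ := by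
    have e1 := hsrg.param_eq G hn0
    rw [Nat.sub_sub, Nat.sub_sub] at e1
    have hkl' : l + 1 ≤ k := hkl
    have hkn' : k + 1 ≤ n := hkn
    zify [hkl', hkn'] at e1
    linear_combination -e1
  set c : ℤ := (2*k+μ:ℤ) - l with hc
  have hLsq := lap_sq hsrg hparam
  have hJv : ∀ y : V → ℤ, ((Matrix.of fun _ _ => (1:ℤ) : Matrix V V ℤ)) *ᵥ y = fun _ => ∑ i, y i := by
    intro y; funext v; simp [Matrix.mulVec, dotProduct]
  -- quotient plumbing
  have hzero : ∀ (a : sumZero V) (N : ℕ),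
      (N • (QuotientAddGroup.mk a : critGroup G) = 0)
        ↔ (N:ℤ) • (a : V → ℤ) ∈ rowSpan (G.lapMatrix ℤ) := by
    intro a N
    have h1 : (N • (QuotientAddGroup.mk a : critGroup G)) = QuotientAddGroup.mk (N • a) := by
      rw [show (QuotientAddGroup.mk a : critGroup G)
          = QuotientAddGroup.mk' ((rowSpan (G.lapMatrix ℤ)).addSubgroupOf (sumZero V)) a from rfl,
        ← map_nsmul]
      rfl
    rw [h1, QuotientAddGroup.eq_zero_iff, AddSubgroup.mem_addSubgroupOf]
    have h2 : ((N • a : sumZero V) : V → ℤ) = (N:ℤ) • (a : V → ℤ) := by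
      rw [Nat.cast_smul_eq_nsmul]
      rfl
    rw [h2]
  -- upper bound: the exponent divides n * μ
  have hexp_dvd : AddMonoid.exponent (critGroup G) ∣ n * μ := by
    apply AddMonoid.exponent_dvd_of_forall_nsmul_eq_zero
    intro q
    induction q using QuotientAddGroup.induction_on with
    | H a =>
      refine (hzero a (n*μ)).2 ?_
      rw [rowSpan_mem_iff (G.isSymm_lapMatrix (R := ℤ)) _]
      refine ⟨c • (a : V → ℤ) - G.lapMatrix ℤ *ᵥ (a : V → ℤ), ?_⟩
      have hx0 : ∑ v, (a : V → ℤ) v = 0 := a.2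
      rw [Matrix.mulVec_sub, Matrix.mulVec_smul, Matrix.mulVec_mulVec, hLsq,
        Matrix.add_mulVec, Matrix.sub_mulVec, Matrix.smul_mulVec,
        Matrix.smul_mulVec, Matrix.smul_mulVec, Matrix.one_mulVec, hJv]
      funext v
      simp only [Pi.sub_apply, Pi.add_apply, Pi.smul_apply, smul_eq_mul, hx0]
      push_cast
      ring
  set N : ℕ := AddMonoid.exponent (critGroup G) with hN
  -- key divisibility
  have hdvd : ∀ u v : V, u ≠ v → ∀ w w' : V,
      ((n:ℤ)*μ) ∣ (N:ℤ) * (fval G (k:ℤ) c u v w - fval G (k:ℤ) c u v w') := by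
    intro u v huv w w'
    set x : V → ℤ := Pi.single u 1 - Pi.single v 1 with hxdef
    have hx : x ∈ sumZero V := by
      show ∑ i, x i = 0
      simp [hxdef, Finset.sum_sub_distrib]
    have hmem : (N:ℤ) • x ∈ rowSpan (G.lapMatrix ℤ) := by
      rw [← hzero ⟨x, hx⟩ N]
      exact AddMonoid.exponent_nsmul_eq_zero _
    obtain ⟨y, hy⟩ := (rowSpan_mem_iff (G.isSymm_lapMatrix (R := ℤ)) _).1 hmem
    have h2 : (G.lapMatrix ℤ * G.lapMatrix ℤ) *ᵥ y = (N:ℤ) • (G.lapMatrix ℤ *ᵥ x) := by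
      rw [← Matrix.mulVec_mulVec, hy, Matrix.mulVec_smul]
    rw [hLsq, Matrix.add_mulVec, Matrix.sub_mulVec, Matrix.smul_mulVec,
      Matrix.smul_mulVec, Matrix.smul_mulVec, Matrix.one_mulVec, hJv, hy] at h2
    have e_w := congrFun h2 w
    have e_w' := congrFun h2 w'
    simp only [Pi.add_apply, Pi.sub_apply, Pi.smul_apply, smul_eq_mul] at e_w e_w'
    refine ⟨y w - y w', ?_⟩
    rw [fval_eq hsrg, fval_eq hsrg]
    linear_combination e_w - e_w'
  -- lower bound: n*μ divides N (as integers)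
  have hcommon : ∀ u v : V, u ≠ v → ¬ G.Adj u v →
      ∃ w, G.Adj u w ∧ G.Adj v w ∧ w ≠ u ∧ w ≠ v := by
    intro u v huv hnadj
    have h0 := hsrg.of_not_adj huv hnadj
    have : 0 < Fintype.card (G.commonNeighbors u v) := by omega
    obtain ⟨⟨w, hw⟩⟩ := Fintype.card_pos_iff.1 this
    exact ⟨w, hw.1, hw.2, fun h => by subst h; exact G.irrefl hw.1,
      fun h => by subst h; exact G.irrefl hw.2⟩
  have hfinal : ((n:ℤ)*μ) ∣ (N:ℤ) := by
    rcases lt_or_eq_of_le hμk with hlt | heq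
    · -- μ < k : find a vertex adjacent to u0 but not v0
      obtain ⟨w1, hw1u, hw1v⟩ : ∃ w, G.Adj u0 w ∧ ¬ G.Adj v0 w := by
        by_contra hno
        push_neg at hno
        have hsub : G.neighborFinset u0 ⊆ G.neighborFinset u0 ∩ G.neighborFinset v0 := by
          intro w hw
          rw [Finset.mem_inter]
          rw [SimpleGraph.mem_neighborFinset] at hw ⊢
          exact ⟨hw, by rw [SimpleGraph.mem_neighborFinset]; exact hno w hw⟩
        have hcard : (G.neighborFinset u0 ∩ G.neighborFinset v0).card = μ := by
          rw [← hsrg.of_not_adj hne0 hnadj0, ← Set.toFinset_card]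
          congr 1
          ext w
          simp [SimpleGraph.mem_commonNeighbors, SimpleGraph.mem_neighborFinset,
            Set.mem_toFinset]
        have := Finset.card_le_card hsub
        rw [hcard, G.card_neighborFinset_eq_degree, hsrg.regular u0] at this
        omega
      obtain ⟨w2, hw2u, hw2v, hw2nu, hw2nv⟩ := hcommon u0 v0 hne0 hnadj0
      have hd := hdvd u0 v0 hne0 w1 w2
      have hv1 : fval G (k:ℤ) c u0 v0 w1 = 1 := by
        have h1 : w1 ≠ u0 := fun h => by subst h; exact G.irrefl hw1u
        have h2 : w1 ≠ v0 := fun h => by subst h; exact hnadj0 hw1u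
        have h3 : G.Adj w1 u0 := hw1u.symm
        have h4 : ¬ G.Adj w1 v0 := fun h => hw1v h.symm
        simp [fval, h1, h2, h3, h4]
      have hv2 : fval G (k:ℤ) c u0 v0 w2 = 0 := by
        simp [fval, hw2nu, hw2nv, hw2u.symm, hw2v.symm]
      rw [hv1, hv2] at hd
      simpa using hd
    · -- μ = k : use both a nonadjacent and an adjacent pair
      have hl : l ≠ 0 := fun h => hnotbip ⟨h, heq⟩
      obtain ⟨w2, hw2u, hw2v, hw2nu, hw2nv⟩ := hcommon u0 v0 hne0 hnadj0
      have hd1 := hdvd u0 v0 hne0 u0 w2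
      have hv1 : fval G (k:ℤ) c u0 v0 u0 = c - k := by
        simp [fval, hne0, G.irrefl, hnadj0]
      have hv2 : fval G (k:ℤ) c u0 v0 w2 = 0 := by
        simp [fval, hw2nu, hw2nv, hw2u.symm, hw2v.symm]
      rw [hv1, hv2] at hd1
      -- adjacent pair with common neighbor
      have hl0 := hsrg.of_adj _ _ hab0
      have : 0 < Fintype.card (G.commonNeighbors a0 b0) := by omega
      obtain ⟨⟨w3, hw3⟩⟩ := Fintype.card_pos_iff.1 this
      have hw3a : G.Adj a0 w3 := hw3.1
      have hw3b : G.Adj b0 w3 := hw3.2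
      have hw3na : w3 ≠ a0 := fun h => by subst h; exact G.irrefl hw3a
      have hw3nb : w3 ≠ b0 := fun h => by subst h; exact G.irrefl hw3b
      have hd2 := hdvd a0 b0 hab0.ne w3 a0
      have hv3 : fval G (k:ℤ) c a0 b0 w3 = 0 := by
        simp [fval, hw3na, hw3nb, hw3a.symm, hw3b.symm]
      have hv4 : fval G (k:ℤ) c a0 b0 a0 = c - k - 1 := by
        simp [fval, hab0.ne, G.irrefl, hab0]
        ring
      rw [hv3, hv4] at hd2
      have := dvd_add hd1 hd2
      have heq2 : (N:ℤ) * (c - k - 0) + (N:ℤ) * (0 - (c - k - 1)) = (N:ℤ) := by ring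
      rwa [heq2] at this
  have h2 : n * μ ∣ N := by
    have : ((n*μ:ℕ):ℤ) ∣ (N:ℤ) := by push_cast; exact hfinal
    exact_mod_cast this
  exact Nat.dvd_antisymm hexp_dvd h2
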